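/- arXiv:1508.00481 — 2 statements merged into one kernel-verified Lean document; each statement's English description precedes it below -/
import Mathlib

section
/- Let d ≥ 2 and let 𝒳 be a set of n distinct vectors in 𝔽₂^m, each of weight exactly two. Then 𝒳 is an (m,n,d-1,1) X-code if and only if 𝒳 is an (m,n,d,0) X-code. -/
/-- An `(·,·,d,x)` X-code on coordinate set `ι`. -/
def IsXCode {ι : Type*} [Fintype ι] (d x : ℕ) (X : Finset (ι → ZMod 2)) : Prop :=
  ∀ S₁ S₂ : Finset (ι → ZMod 2), S₁ ⊆ X → S₂ ⊆ X → Disjoint S₁ S₂ →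
    S₁.card ≤ x → 1 ≤ S₂.card → S₂.card ≤ d →
    ∃ j : ι, (∑ s ∈ S₂, s j) = 1 ∧ ∀ s ∈ S₁, s j = 0

/-- The weight of a vector: its number of nonzero coordinates. -/
def wt {ι : Type*} [Fintype ι] (s : ι → ZMod 2) : ℕ :=
  (Finset.univ.filter fun j => s j ≠ 0).card

lemma zmod2_ne_zero {x : ZMod 2} (h : x ≠ 0) : x = 1 := by
  revert h; revert x; decide

lemma sum_eq_wt {ι : Type*} [Fintype ι] (u : ι → ZMod 2) :
    (∑ j, u j) = (wt u : ZMod 2) := by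
  rw [wt]
  rw [← Finset.sum_filter_ne_zero Finset.univ]
  rw [Finset.sum_congr rfl (fun j hj => zmod2_ne_zero (Finset.mem_filter.mp hj).2)]
  simp

/-- For `d ≥ 2`, a set of `n` distinct vectors of `𝔽₂^m` of constant weight two is an
`(m,n,d-1,1)` X-code if and only if it is an `(m,n,d,0)` X-code. -/
theorem xcode_weight_two_iff (m n d : ℕ) (hd : 2 ≤ d)
    (X : Finset (Fin m → ZMod 2)) (hcard : X.card = n) (hwt : ∀ s ∈ X, wt s = 2) :
    IsXCode (d - 1) 1 X ↔ IsXCode d 0 X := by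
  constructor
  · intro h S₁ S₂ hS₁ hS₂ hdisj hc1 hc2l hc2u
    have hS₁e : S₁ = ∅ := Finset.card_eq_zero.mp (Nat.le_zero.mp hc1)
    subst hS₁e
    by_cases hle : S₂.card ≤ d - 1
    · obtain ⟨j, hj1, _⟩ := h ∅ S₂ (Finset.empty_subset X) hS₂ (Finset.disjoint_empty_left S₂)
        (by simp) hc2l hle
      exact ⟨j, hj1, by simp⟩
    · -- S₂.card = d here
      obtain ⟨s, hs⟩ := Finset.card_pos.mp (by omega : 0 < S₂.card)
      have hcerase : (S₂.erase s).card = S₂.card - 1 := Finset.card_erase_of_mem hs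
      obtain ⟨j, hj1, hj2⟩ := h {s} (S₂.erase s)
        (Finset.singleton_subset_iff.mpr (hS₂ hs))
        (fun t ht => hS₂ (Finset.mem_of_mem_erase ht))
        (Finset.disjoint_singleton_left.mpr (Finset.notMem_erase s S₂))
        (by simp) (by omega) (by omega)
      refine ⟨j, ?_, by simp⟩
      rw [← Finset.add_sum_erase _ _ hs, hj2 s (Finset.mem_singleton_self s), zero_add, hj1]
  · intro h S₁ S₂ hS₁ hS₂ hdisj hc1 hc2l hc2u
    rcases S₁.eq_empty_or_nonempty with hS₁e | hS₁ne
    · subst hS₁e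
      obtain ⟨j, hj1, _⟩ := h ∅ S₂ (Finset.empty_subset X) hS₂ (Finset.disjoint_empty_left S₂)
        (le_refl 0) hc2l (by omega)
      exact ⟨j, hj1, by simp⟩
    · have hc1' : S₁.card = 1 := le_antisymm hc1 (Finset.card_pos.mpr hS₁ne)
      obtain ⟨a, ha⟩ := Finset.card_eq_one.mp hc1'
      subst ha
      have haX : a ∈ X := hS₁ (Finset.mem_singleton_self a)
      by_contra hcon
      push_neg at hcon
      set v : Fin m → ZMod 2 := fun j => ∑ s ∈ S₂, s j with hv
      -- every nonzero coord of v is a nonzero coord of a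
      have hsupp : (Finset.univ.filter fun j => v j ≠ 0)
          ⊆ (Finset.univ.filter fun j => a j ≠ 0) := by
        intro j hj
        rw [Finset.mem_filter] at hj ⊢
        refine ⟨Finset.mem_univ j, ?_⟩
        obtain ⟨s, hs, hs0⟩ := hcon j (zmod2_ne_zero hj.2)
        rw [Finset.mem_singleton] at hs
        subst hs
        exact hs0
      -- v is nonzero somewhere
      obtain ⟨j₀, hj₀, _⟩ := h ∅ S₂ (Finset.empty_subset X) hS₂ (Finset.disjoint_empty_left S₂)
        (le_refl 0) hc2l (by omega)
      have hwv1 : 1 ≤ wt v := by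
        rw [wt]
        refine Finset.card_pos.mpr ⟨j₀, Finset.mem_filter.mpr ⟨Finset.mem_univ j₀, ?_⟩⟩
        rw [hv]; simp only; rw [hj₀]; exact one_ne_zero
      have hwv2 : wt v ≤ 2 := by
        have := Finset.card_le_card hsupp
        rw [wt]
        calc (Finset.univ.filter fun j => v j ≠ 0).card
            ≤ (Finset.univ.filter fun j => a j ≠ 0).card := Finset.card_le_card hsupp
          _ = wt a := rfl
          _ = 2 := hwt a haX
      -- parity: wt v is even
      have hpar : (wt v : ZMod 2) = 0 := by
        rw [← sum_eq_wt]
        have : ∑ j, v j = ∑ s ∈ S₂, ∑ j, s j := by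
          rw [hv]; exact Finset.sum_comm
        rw [this]
        refine Finset.sum_eq_zero fun s hs => ?_
        rw [sum_eq_wt, hwt s (hS₂ hs)]
        decide
      have hwv : wt v = 2 := by
        have hdvd : (2 : ℕ) ∣ wt v := (ZMod.natCast_eq_zero_iff _ 2).mp hpar
        omega
      -- supports equal
      have hsuppeq : (Finset.univ.filter fun j => v j ≠ 0)
          = (Finset.univ.filter fun j => a j ≠ 0) := by
        apply Finset.eq_of_subset_of_card_le hsupp
        have : (Finset.univ.filter fun j => a j ≠ 0).card = 2 := hwt a haX
        rw [this]
        exact le_of_eq hwv.symm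
      -- hence v = a
      have hva : v = a := by
        funext j
        by_cases hja : a j = 0
        · by_contra hvj0
          have hvj : v j ≠ 0 := fun hh => hvj0 (hh.trans hja.symm)
          have : j ∈ Finset.univ.filter fun j => a j ≠ 0 := by
            rw [← hsuppeq]; exact Finset.mem_filter.mpr ⟨Finset.mem_univ j, hvj⟩
          exact (Finset.mem_filter.mp this).2 hja
        · have : j ∈ Finset.univ.filter fun j => v j ≠ 0 := by
            rw [hsuppeq]; exact Finset.mem_filter.mpr ⟨Finset.mem_univ j, hja⟩
          rw [zmod2_ne_zero (Finset.mem_filter.mp this).2, zmod2_ne_zero hja]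
      -- now insert a into S₂: sum is zero, contradicting (d,0)
      have haS₂ : a ∉ S₂ := Finset.disjoint_singleton_left.mp hdisj
      obtain ⟨j, hj1, _⟩ := h ∅ (insert a S₂) (Finset.empty_subset X)
        (Finset.insert_subset haX hS₂)
        (Finset.disjoint_empty_left _) (le_refl 0)
        (by rw [Finset.card_insert_of_notMem haS₂]; omega)
        (by rw [Finset.card_insert_of_notMem haS₂]; omega)
      rw [Finset.sum_insert haS₂] at hj1
      have : a j + v j = 1 := hj1
      rw [hva] at this
      rw [CharTwo.add_self_eq_zero] at this
      exact one_ne_zero this.symm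
end

section
/- Let r ≥ 4 and let (V,ℬ) be an r-even-free triple packing. Then the set of indicator vectors of the blocks of ℬ is a (|V|, |ℬ|, 1, 2) X-code of constant weight three that is also a (|V|, |ℬ|, 3, 1) X-code and a (|V|, |ℬ|, r, 0) X-code. -/
/-- A configuration is even if every point lies in an even number of its blocks. -/
def IsEvenConfig {V : Type*} [DecidableEq V] (C : Finset (Finset V)) : Prop :=
  ∀ p : V, Even (C.filter fun b => p ∈ b).card


section XCodeAux
set_option linter.unusedSectionVars false

variable {V : Type*} [Fintype V] [DecidableEq V]

/-- The indicator vector of a block. -/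
def blockInd (b : Finset V) : V → ZMod 2 := fun p => if p ∈ b then 1 else 0

lemma blockInd_inj : Function.Injective (blockInd (V := V)) := by
  intro b c h
  ext p
  have hp := congrFun h p
  simp only [blockInd] at hp
  by_cases h1 : p ∈ b <;> by_cases h2 : p ∈ c <;> simp_all

lemma sum_blockInd (C : Finset (Finset V)) (j : V) :
    ∑ b ∈ C, blockInd b j = ((C.filter fun b => j ∈ b).card : ZMod 2) := by
  simp [blockInd, Finset.sum_boole]

lemma cast_eq_one_iff (n : ℕ) : (n : ZMod 2) = 1 ↔ ¬ Even n := by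
  have h0 : (n : ZMod 2) = 0 ↔ Even n := by
    rw [ZMod.natCast_eq_zero_iff]; exact even_iff_two_dvd.symm
  have h1 : ∀ x : ZMod 2, x = 1 ↔ ¬ x = 0 := by decide
  rw [h1, not_iff_not, h0]

lemma cast_eq_zero_iff (n : ℕ) : (n : ZMod 2) = 0 ↔ Even n := by
  rw [ZMod.natCast_eq_zero_iff]; exact even_iff_two_dvd.symm

lemma inter_le {B : Finset (Finset V)}
    (hpack : ∀ p : Finset V, p.card = 2 → (B.filter fun b => p ⊆ b).card ≤ 1)
    {b c : Finset V} (hb : b ∈ B) (hc : c ∈ B) (hne : b ≠ c) : (b ∩ c).card ≤ 1 := by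
  by_contra h
  push_neg at h
  obtain ⟨p, hp, hp2⟩ := Finset.exists_subset_card_eq h
  have hsub : ({b, c} : Finset (Finset V)) ⊆ B.filter fun d => p ⊆ d := by
    intro d hd
    simp only [Finset.mem_insert, Finset.mem_singleton] at hd
    rcases hd with rfl | rfl <;> simp only [Finset.mem_filter] <;>
      exact ⟨by assumption, hp.trans (by simp [Finset.inter_subset_left, Finset.inter_subset_right])⟩
  have h2 : ({b, c} : Finset (Finset V)).card = 2 := Finset.card_pair hne
  have := Finset.card_le_card hsub
  have := hpack p hp2
  omega

lemma parity_odd_support (C : Finset (Finset V)) (h3 : ∀ b ∈ C, b.card = 3) :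
    ((Finset.univ.filter fun p : V => ¬ Even ((C.filter fun b => p ∈ b).card)).card : ZMod 2)
      = (C.card : ZMod 2) := by
  have key : ∑ p : V, (((C.filter fun b => p ∈ b).card : ℕ) : ZMod 2) = (C.card : ZMod 2) := by
    have : ∀ p : V, (((C.filter fun b => p ∈ b).card : ℕ) : ZMod 2) = ∑ b ∈ C, blockInd b p :=
      fun p => (sum_blockInd C p).symm
    simp_rw [this]
    rw [Finset.sum_comm]
    have : ∀ b ∈ C, ∑ p : V, blockInd b p = (1 : ZMod 2) := by
      intro b hb
      have : ∑ p : V, blockInd b p = ((Finset.univ.filter fun p => p ∈ b).card : ZMod 2) := by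
        simp [blockInd, Finset.sum_boole]
      rw [this, Finset.filter_univ_mem, h3 b hb]
      decide
    rw [Finset.sum_congr rfl this]
    simp
  rw [← key]
  rw [← Finset.sum_filter_add_sum_filter_not Finset.univ
    (fun p : V => ¬ Even ((C.filter fun b => p ∈ b).card))]
  have e1 : ∀ p ∈ Finset.univ.filter fun p : V => ¬ Even ((C.filter fun b => p ∈ b).card),
      (((C.filter fun b => p ∈ b).card : ℕ) : ZMod 2) = 1 := by
    intro p hp
    simp only [Finset.mem_filter] at hp
    exact (cast_eq_one_iff _).2 hp.2
  have e2 : ∀ p ∈ Finset.univ.filter fun p : V => ¬ ¬ Even ((C.filter fun b => p ∈ b).card),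
      (((C.filter fun b => p ∈ b).card : ℕ) : ZMod 2) = 0 := by
    intro p hp
    simp only [Finset.mem_filter, not_not] at hp
    exact (cast_eq_zero_iff _).2 hp.2
  rw [Finset.sum_congr rfl e1, Finset.sum_congr rfl e2]
  simp

lemma cnt_two {C : Finset (Finset V)} {q : V} {b : Finset V}
    (hb : b ∈ C) (hqb : q ∈ b) (hC3 : C.card ≤ 3)
    (hev : Even ((C.filter fun d => q ∈ d).card)) :
    (C.filter fun d => q ∈ d).card = 2 := by
  have h1 : b ∈ C.filter fun d => q ∈ d := Finset.mem_filter.2 ⟨hb, hqb⟩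
  have hle : (C.filter fun d => q ∈ d).card ≤ 3 :=
    le_trans (Finset.card_filter_le _ _) hC3
  have hpos : 1 ≤ (C.filter fun d => q ∈ d).card := Finset.card_pos.2 ⟨b, h1⟩
  obtain ⟨k, hk⟩ := hev
  omega

lemma two_blocks {C : Finset (Finset V)} {q : V} {c : Finset V}
    (hc : c ∈ C.filter fun d => q ∈ d)
    (h2 : (C.filter fun d => q ∈ d).card = 2) :
    ∃ e, e ≠ c ∧ e ∈ C ∧ q ∈ e ∧ (C.filter fun d => q ∈ d) = {c, e} := by
  obtain ⟨a, b, hab, hset⟩ := Finset.card_eq_two.1 h2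
  rw [hset] at hc
  simp only [Finset.mem_insert, Finset.mem_singleton] at hc
  rcases hc with rfl | rfl
  · refine ⟨b, hab.symm, ?_, ?_, by rw [hset]⟩
    · have : b ∈ C.filter fun d => q ∈ d := by rw [hset]; simp
      exact (Finset.mem_filter.1 this).1
    · have : b ∈ C.filter fun d => q ∈ d := by rw [hset]; simp
      exact (Finset.mem_filter.1 this).2
  · refine ⟨a, hab, ?_, ?_, by rw [hset, Finset.pair_comm]⟩
    · have : a ∈ C.filter fun d => q ∈ d := by rw [hset]; simp
      exact (Finset.mem_filter.1 this).1
    · have : a ∈ C.filter fun d => q ∈ d := by rw [hset]; simp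
      exact (Finset.mem_filter.1 this).2

lemma pair_subset_inter_absurd {B : Finset (Finset V)}
    (hpack : ∀ p : Finset V, p.card = 2 → (B.filter fun b => p ⊆ b).card ≤ 1)
    {b c : Finset V} (hb : b ∈ B) (hc : c ∈ B) (hne : b ≠ c)
    {x y : V} (hxy : x ≠ y) (hxb : x ∈ b) (hxc : x ∈ c) (hyb : y ∈ b) (hyc : y ∈ c) :
    False := by
  have h1 : ({x, y} : Finset V) ⊆ b ∩ c := by
    intro z hz
    simp only [Finset.mem_insert, Finset.mem_singleton] at hz
    rcases hz with rfl | rfl <;> exact Finset.mem_inter.2 ⟨by assumption, by assumption⟩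
  have h2 := Finset.card_le_card h1
  rw [Finset.card_pair hxy] at h2
  have := inter_le hpack hb hc hne
  omega

lemma case3_O1 {B : Finset (Finset V)}
    (hblock : ∀ b ∈ B, b.card = 3)
    (hpack : ∀ p : Finset V, p.card = 2 → (B.filter fun b => p ⊆ b).card ≤ 1)
    {C : Finset (Finset V)} (hCB : C ⊆ B) (hC3 : C.card = 3)
    {p : V} (hO : ∀ q : V, ¬ Even ((C.filter fun b => q ∈ b).card) ↔ q = p) :
    False := by
  have hCle : C.card ≤ 3 := le_of_eq hC3
  have hpodd : ¬ Even ((C.filter fun b => p ∈ b).card) := (hO p).2 rfl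
  have hpos : (C.filter fun b => p ∈ b).Nonempty := by
    rw [Finset.nonempty_iff_ne_empty]
    intro h
    rw [h] at hpodd
    simp at hpodd
  obtain ⟨c, hcf⟩ := hpos
  obtain ⟨hcC, hpc⟩ := Finset.mem_filter.1 hcf
  have hcB : c ∈ B := hCB hcC
  have hce : (c.erase p).card = 2 := by
    rw [Finset.card_erase_of_mem hpc, hblock c hcB]
  obtain ⟨q1, q2, hq12, hqset⟩ := Finset.card_eq_two.1 hce
  have hq1 : q1 ∈ c.erase p := by rw [hqset]; simp
  have hq2 : q2 ∈ c.erase p := by rw [hqset]; simp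
  have hq1c : q1 ∈ c := Finset.mem_of_mem_erase hq1
  have hq2c : q2 ∈ c := Finset.mem_of_mem_erase hq2
  have hq1p : q1 ≠ p := Finset.ne_of_mem_erase hq1
  have hq2p : q2 ≠ p := Finset.ne_of_mem_erase hq2
  have hev1 : Even ((C.filter fun b => q1 ∈ b).card) := not_not.1 fun h => hq1p ((hO q1).1 h)
  have hev2 : Even ((C.filter fun b => q2 ∈ b).card) := not_not.1 fun h => hq2p ((hO q2).1 h)
  obtain ⟨e1, he1c, he1C, hq1e1, hf1⟩ :=
    two_blocks (Finset.mem_filter.2 ⟨hcC, hq1c⟩) (cnt_two hcC hq1c hCle hev1)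
  obtain ⟨e2, he2c, he2C, hq2e2, hf2⟩ :=
    two_blocks (Finset.mem_filter.2 ⟨hcC, hq2c⟩) (cnt_two hcC hq2c hCle hev2)
  have he1B : e1 ∈ B := hCB he1C
  have he2B : e2 ∈ B := hCB he2C
  have he12 : e1 ≠ e2 := by
    rintro rfl
    exact pair_subset_inter_absurd hpack hcB he1B (Ne.symm he1c) hq12 hq1c hq1e1 hq2c hq2e2
  have hpe1 : p ∉ e1 := fun h =>
    pair_subset_inter_absurd hpack hcB he1B (Ne.symm he1c) (Ne.symm hq1p) hpc h hq1c hq1e1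
  have hpe2 : p ∉ e2 := fun h =>
    pair_subset_inter_absurd hpack hcB he2B (Ne.symm he2c) (Ne.symm hq2p) hpc h hq2c hq2e2
  have hsub : ({c, e1, e2} : Finset (Finset V)) ⊆ C := by
    intro d hd
    simp only [Finset.mem_insert, Finset.mem_singleton] at hd
    rcases hd with rfl | rfl | rfl <;> assumption
  have hcard3 : ({c, e1, e2} : Finset (Finset V)).card = 3 := by
    rw [Finset.card_insert_of_notMem, Finset.card_pair he12]
    simp only [Finset.mem_insert, Finset.mem_singleton]
    push_neg
    exact ⟨Ne.symm he1c, Ne.symm he2c⟩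
  have hCeq : C = ({c, e1, e2} : Finset (Finset V)) :=
    (Finset.eq_of_subset_of_card_le hsub (by omega)).symm
  have hsube2 : e1.erase q1 ⊆ e2 := by
    intro x hx
    have hxe1 : x ∈ e1 := Finset.mem_of_mem_erase hx
    have hxq1 : x ≠ q1 := Finset.ne_of_mem_erase hx
    have hxp : x ≠ p := fun h => hpe1 (h ▸ hxe1)
    have hevx : Even ((C.filter fun b => x ∈ b).card) := not_not.1 fun h => hxp ((hO x).1 h)
    have hcx : (C.filter fun b => x ∈ b).card = 2 := cnt_two he1C hxe1 hCle hevx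
    have hxc : x ∉ c := fun h =>
      pair_subset_inter_absurd hpack hcB he1B (Ne.symm he1c) (Ne.symm hxq1) hq1c hq1e1 h hxe1
    by_contra hxe2
    have : C.filter (fun b => x ∈ b) ⊆ {e1} := by
      intro d hd
      obtain ⟨hdC, hxd⟩ := Finset.mem_filter.1 hd
      rw [hCeq] at hdC
      simp only [Finset.mem_insert, Finset.mem_singleton] at hdC
      rcases hdC with rfl | rfl | rfl
      · exact absurd hxd hxc
      · simp
      · exact absurd hxd hxe2
    have := Finset.card_le_card this
    simp at this
    omega
  have : (e1.erase q1).card = 2 := by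
    rw [Finset.card_erase_of_mem hq1e1, hblock e1 he1B]
  obtain ⟨x, y, hxy, hxyset⟩ := Finset.card_eq_two.1 this
  have hxm : x ∈ e1.erase q1 := by rw [hxyset]; simp
  have hym : y ∈ e1.erase q1 := by rw [hxyset]; simp
  exact pair_subset_inter_absurd hpack he1B he2B he12 hxy
    (Finset.mem_of_mem_erase hxm) (hsube2 hxm) (Finset.mem_of_mem_erase hym) (hsube2 hym)

lemma key_lemma {r : ℕ} (hr : 4 ≤ r) {B : Finset (Finset V)}
    (hblock : ∀ b ∈ B, b.card = 3)
    (hpack : ∀ p : Finset V, p.card = 2 → (B.filter fun b => p ⊆ b).card ≤ 1)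
    (heven : ∀ C ⊆ B, C.Nonempty → C.card ≤ r → ¬ IsEvenConfig C)
    {C : Finset (Finset V)} (hCB : C ⊆ B) (hC1 : 1 ≤ C.card) (hC3 : C.card ≤ 3)
    {b₁ : Finset V} (hb₁ : b₁ ∈ B) (hb₁C : b₁ ∉ C) :
    ∃ j : V, ¬ Even ((C.filter fun b => j ∈ b).card) ∧ j ∉ b₁ := by
  by_contra hcon
  push_neg at hcon
  have hb₁3 : b₁.card = 3 := hblock b₁ hb₁
  interval_cases hc : C.card
  · obtain ⟨b, rfl⟩ := Finset.card_eq_one.1 hc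
    have hbB : b ∈ B := hCB (by simp)
    have hcnt : ∀ j ∈ b, (({b} : Finset (Finset V)).filter fun d => j ∈ d).card = 1 := by
      intro j hj
      rw [Finset.filter_singleton, if_pos hj, Finset.card_singleton]
    have hsub : b ⊆ b₁ := by
      intro j hj
      exact hcon j (by rw [hcnt j hj]; simp)
    have : b = b₁ := Finset.eq_of_subset_of_card_le hsub (by rw [hb₁3, hblock b hbB])
    exact hb₁C (by simp [this])
  · obtain ⟨b, c, hbc, rfl⟩ := Finset.card_eq_two.1 hc
    have hbB : b ∈ B := hCB (by simp)
    have hcB : c ∈ B := hCB (by simp)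
    have hcnt : ∀ j : V, j ∈ b → j ∉ c →
        (({b, c} : Finset (Finset V)).filter fun d => j ∈ d).card = 1 := by
      intro j hj hj'
      rw [Finset.filter_insert, if_pos hj, Finset.filter_singleton, if_neg hj']
      simp
    have hcnt' : ∀ j : V, j ∉ b → j ∈ c →
        (({b, c} : Finset (Finset V)).filter fun d => j ∈ d).card = 1 := by
      intro j hj hj'
      rw [Finset.filter_insert, if_neg hj, Finset.filter_singleton, if_pos hj']
      simp
    have hsub : (b \ c) ∪ (c \ b) ⊆ b₁ := by
      intro j hj
      rcases Finset.mem_union.1 hj with h | h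
      · obtain ⟨h1, h2⟩ := Finset.mem_sdiff.1 h
        exact hcon j (by rw [hcnt j h1 h2]; simp)
      · obtain ⟨h1, h2⟩ := Finset.mem_sdiff.1 h
        exact hcon j (by rw [hcnt' j h2 h1]; simp)
    have hdisj : Disjoint (b \ c) (c \ b) := by
      rw [Finset.disjoint_left]
      intro j hj hj'
      exact (Finset.mem_sdiff.1 hj).2 (Finset.mem_sdiff.1 hj').1
    have hbig := Finset.card_le_card hsub
    rw [Finset.card_union_of_disjoint hdisj] at hbig
    have hib : (b \ c).card + (b ∩ c).card = b.card := Finset.card_sdiff_add_card_inter b c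
    have hic : (c \ b).card + (c ∩ b).card = c.card := Finset.card_sdiff_add_card_inter c b
    have hii : (b ∩ c).card ≤ 1 := inter_le hpack hbB hcB hbc
    have hii' : (c ∩ b).card ≤ 1 := by rwa [Finset.inter_comm]
    have := hblock b hbB
    have := hblock c hcB
    omega
  · set O := Finset.univ.filter fun p : V => ¬ Even ((C.filter fun b => p ∈ b).card) with hOdef
    have hOsub : O ⊆ b₁ := by
      intro j hj
      exact hcon j (Finset.mem_filter.1 hj).2
    have hOcard : (O.card : ZMod 2) = 1 := by
      rw [hOdef, parity_odd_support C (fun b hb => hblock b (hCB hb)), hc]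
      decide
    have hOodd : ¬ Even O.card := (cast_eq_one_iff _).1 hOcard
    have hOle : O.card ≤ 3 := by
      have := Finset.card_le_card hOsub
      omega
    rw [Nat.not_even_iff] at hOodd
    have : O.card = 1 ∨ O.card = 3 := by omega
    rcases this with h1 | h3
    · obtain ⟨p, hp⟩ := Finset.card_eq_one.1 h1
      refine case3_O1 hblock hpack hCB hc (p := p) ?_
      intro q
      constructor
      · intro hq
        have : q ∈ O := Finset.mem_filter.2 ⟨Finset.mem_univ q, hq⟩
        rw [hp] at this
        exact Finset.mem_singleton.1 this
      · rintro rfl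
        have : q ∈ O := by rw [hp]; simp
        exact (Finset.mem_filter.1 this).2
    · have hOeq : O = b₁ := Finset.eq_of_subset_of_card_le hOsub (by omega)
      refine heven (insert b₁ C) ?_ ⟨b₁, by simp⟩ ?_ ?_
      · exact Finset.insert_subset hb₁ hCB
      · rw [Finset.card_insert_of_notMem hb₁C]
        omega
      · intro p
        have hmem : p ∈ b₁ ↔ ¬ Even ((C.filter fun b => p ∈ b).card) := by
          rw [← hOeq, hOdef]
          simp
        rw [Finset.filter_insert]
        by_cases hpb : p ∈ b₁
        · rw [if_pos hpb, Finset.card_insert_of_notMem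
            (fun h => hb₁C (Finset.mem_of_mem_filter b₁ h))]
          have := hmem.1 hpb
          rw [Nat.not_even_iff] at this
          rw [Nat.even_iff]
          omega
        · rw [if_neg hpb]
          by_contra hne
          exact hpb (hmem.2 hne)

end XCodeAux

/-- For `r ≥ 4`, the block indicator vectors of an `r`-even-free triple packing
`(V, ℬ)` form a `(|V|, |ℬ|, 1, 2)` X-code of constant weight three that is also a
`(|V|, |ℬ|, 3, 1)` X-code and a `(|V|, |ℬ|, r, 0)` X-code. -/
theorem rEvenFree_packing_xcode {V : Type*} [Fintype V] [DecidableEq V]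
    (r : ℕ) (hr : 4 ≤ r) (B : Finset (Finset V))
    (hblock : ∀ b ∈ B, b.card = 3)
    (hpack : ∀ p : Finset V, p.card = 2 → (B.filter fun b => p ⊆ b).card ≤ 1)
    (heven : ∀ C ⊆ B, C.Nonempty → C.card ≤ r → ¬ IsEvenConfig C) :
    (B.image fun b => fun p : V => if p ∈ b then (1 : ZMod 2) else 0).card = B.card ∧
      (∀ s ∈ B.image fun b => fun p : V => if p ∈ b then (1 : ZMod 2) else 0,
        wt s = 3) ∧
      IsXCode 1 2 (B.image fun b => fun p : V => if p ∈ b then (1 : ZMod 2) else 0) ∧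
      IsXCode 3 1 (B.image fun b => fun p : V => if p ∈ b then (1 : ZMod 2) else 0) ∧
      IsXCode r 0 (B.image fun b => fun p : V => if p ∈ b then (1 : ZMod 2) else 0) := by

  have hfind : (fun b : Finset V => fun p : V => if p ∈ b then (1 : ZMod 2) else 0) =
      blockInd := rfl
  rw [hfind]
  -- helper: pull back subsets of the image
  have hpull : ∀ S : Finset (V → ZMod 2), S ⊆ B.image blockInd →
      ∃ C, C ⊆ B ∧ C.image blockInd = S ∧ C.card = S.card := by
    intro S hS
    obtain ⟨C, hCB, hC⟩ := Finset.subset_image_iff.1 hS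
    exact ⟨C, hCB, hC, by rw [← hC, Finset.card_image_of_injective _ blockInd_inj]⟩
  have hsum : ∀ (C : Finset (Finset V)) (j : V),
      ∑ s ∈ C.image blockInd, s j = ((C.filter fun b => j ∈ b).card : ZMod 2) := by
    intro C j
    rw [Finset.sum_image (fun b _ c _ h => blockInd_inj h)]
    exact sum_blockInd C j
  refine ⟨Finset.card_image_of_injective _ blockInd_inj, ?_, ?_, ?_, ?_⟩
  · -- constant weight three
    intro s hs
    obtain ⟨b, hb, rfl⟩ := Finset.mem_image.1 hs
    have hfe : (Finset.univ.filter fun j => blockInd b j ≠ 0) = b := by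
      ext j
      simp only [Finset.mem_filter, Finset.mem_univ, true_and, blockInd]
      by_cases h : j ∈ b <;> simp [h]
    rw [wt, hfe, hblock b hb]
  · -- (1, 2) X-code
    intro S₁ S₂ hS₁ hS₂ hdisj hc₁ hc₂ hc₂'
    obtain ⟨C, hCB, hCimg, hCcard⟩ := hpull S₂ hS₂
    have hC1 : C.card = 1 := by omega
    obtain ⟨b, rfl⟩ := Finset.card_eq_one.1 hC1
    have hbB : b ∈ B := hCB (by simp)
    -- bad points of b are those hit by some vector of S₁
    set bad := b.filter fun j => ¬ ∀ s ∈ S₁, s j = 0 with hbaddef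
    have hbadsub : bad ⊆ S₁.biUnion fun s => b.filter fun j => s j ≠ 0 := by
      intro j hj
      obtain ⟨hjb, hjbad⟩ := Finset.mem_filter.1 hj
      push_neg at hjbad
      obtain ⟨s, hsS, hsj⟩ := hjbad
      exact Finset.mem_biUnion.2 ⟨s, hsS, Finset.mem_filter.2 ⟨hjb, hsj⟩⟩
    have hbound : ∀ s ∈ S₁, (b.filter fun j => s j ≠ 0).card ≤ 1 := by
      intro s hsS
      obtain ⟨c, hcB, rfl⟩ := Finset.mem_image.1 (hS₁ hsS)
      have hcb : c ≠ b := by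
        rintro rfl
        exact (Finset.disjoint_left.1 hdisj) hsS (by rw [← hCimg]; simp)
      have : (b.filter fun j => blockInd c j ≠ 0) = b ∩ c := by
        ext j
        simp only [Finset.mem_filter, Finset.mem_inter, blockInd]
        by_cases h : j ∈ c <;> simp [h]
      rw [this]
      exact inter_le hpack hbB hcB (Ne.symm hcb)
    have hbadcard : bad.card ≤ 2 := by
      calc bad.card ≤ (S₁.biUnion fun s => b.filter fun j => s j ≠ 0).card :=
            Finset.card_le_card hbadsub
        _ ≤ ∑ s ∈ S₁, (b.filter fun j => s j ≠ 0).card := Finset.card_biUnion_le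
        _ ≤ ∑ _s ∈ S₁, 1 := Finset.sum_le_sum hbound
        _ = S₁.card := by simp
        _ ≤ 2 := hc₁
    have hbadb : bad ⊆ b := Finset.filter_subset _ _
    have hgood : (b \ bad).Nonempty := by
      rw [← Finset.card_pos, Finset.card_sdiff_of_subset hbadb, hblock b hbB]
      omega
    obtain ⟨j, hj⟩ := hgood
    obtain ⟨hjb, hjbad⟩ := Finset.mem_sdiff.1 hj
    refine ⟨j, ?_, ?_⟩
    · rw [← hCimg, hsum]
      rw [Finset.filter_singleton, if_pos hjb]
      simp
    · exact not_not.1 fun hno => hjbad (Finset.mem_filter.2 ⟨hjb, hno⟩)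
  · -- (3, 1) X-code
    intro S₁ S₂ hS₁ hS₂ hdisj hc₁ hc₂ hc₂'
    obtain ⟨C, hCB, hCimg, hCcard⟩ := hpull S₂ hS₂
    rcases Finset.eq_empty_or_nonempty S₁ with rfl | ⟨s, hs⟩
    · obtain ⟨p, hp⟩ : ∃ p : V, ¬ Even ((C.filter fun b => p ∈ b).card) := by
        have := heven C hCB (Finset.card_pos.1 (by omega)) (by omega)
        rw [IsEvenConfig] at this
        push_neg at this
        exact this
      exact ⟨p, by rw [← hCimg, hsum]; exact (cast_eq_one_iff _).2 hp, by simp⟩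
    · have hS₁eq : ({s} : Finset (V → ZMod 2)) = S₁ :=
        Finset.eq_of_subset_of_card_le (Finset.singleton_subset_iff.2 hs)
          (by simpa using hc₁)
      obtain ⟨b₁, hb₁B, rfl⟩ := Finset.mem_image.1 (hS₁ hs)
      have hb₁C : b₁ ∉ C := by
        intro h
        exact (Finset.disjoint_left.1 hdisj) hs (by rw [← hCimg]; exact Finset.mem_image_of_mem _ h)
      obtain ⟨j, hjodd, hjb₁⟩ := key_lemma hr hblock hpack heven hCB (by omega) (by omega)
        hb₁B hb₁C
      refine ⟨j, by rw [← hCimg, hsum]; exact (cast_eq_one_iff _).2 hjodd, ?_⟩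
      intro t ht
      rw [← hS₁eq, Finset.mem_singleton] at ht
      subst ht
      simp [blockInd, hjb₁]
  · -- (r, 0) X-code
    intro S₁ S₂ hS₁ hS₂ hdisj hc₁ hc₂ hc₂'
    have hS₁e : S₁ = ∅ := Finset.card_eq_zero.1 (by omega)
    subst hS₁e
    obtain ⟨C, hCB, hCimg, hCcard⟩ := hpull S₂ hS₂
    obtain ⟨p, hp⟩ : ∃ p : V, ¬ Even ((C.filter fun b => p ∈ b).card) := by
      have := heven C hCB (Finset.card_pos.1 (by omega)) (by omega)
      rw [IsEvenConfig] at this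
      push_neg at this
      exact this
    exact ⟨p, by rw [← hCimg, hsum]; exact (cast_eq_one_iff _).2 hp, by simp⟩
end
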